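/- Let E and F be nonempty convex sets in ℝⁿ such that every vector u ∈ ℝⁿ is uniquely expressible as u = y + z with y ∈ E, z ∈ F, and y · z = 0 (uniqueness meaning: if u = y₁ + z₁ = y₂ + z₂ with y₁, y₂ ∈ E, z₁, z₂ ∈ F, y₁ · z₁ = 0 and y₂ · z₂ = 0, then y₁ = y₂ and z₁ = z₂). Then E ∩ F = {0}; in particular, the origin belongs to both E and F. -/
import Mathlib

open RealInnerProductSpace Pointwise

/-- The (negative) polar set of `X`. -/
def polarSet {n : ℕ} (X : Set (EuclideanSpace ℝ (Fin n))) : Set (EuclideanSpace ℝ (Fin n)) :=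
  {x | ∀ e ∈ X, ⟪x, e⟫ ≤ 0}

theorem inter_eq_zero_of_unique_orthogonal_decomposition
    (n : ℕ) (E F : Set (EuclideanSpace ℝ (Fin n)))
    (hEne : E.Nonempty) (hEconv : Convex ℝ E)
    (hFne : F.Nonempty) (hFconv : Convex ℝ F)
(hex : ∀ u : EuclideanSpace ℝ (Fin n), ∃ y ∈ E, ∃ z ∈ F, ⟪y, z⟫ = 0 ∧ u = y + z)
    (huniq : ∀ u y₁ z₁ y₂ z₂ : EuclideanSpace ℝ (Fin n),
      y₁ ∈ E → z₁ ∈ F → y₂ ∈ E → z₂ ∈ F →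
      ⟪y₁, z₁⟫ = 0 → ⟪y₂, z₂⟫ = 0 →
      u = y₁ + z₁ → u = y₂ + z₂ → y₁ = y₂ ∧ z₁ = z₂) :
    E ∩ F = {0} := by
  obtain ⟨y, hy, z, hz, hyz, h⟩ := hex 0
  have hzy : z = -y := eq_neg_of_add_eq_zero_right h.symm
  have hy0 : y = 0 := by
    rw [hzy, inner_neg_right, neg_eq_zero, inner_self_eq_zero] at hyz
    exact hyz
  have hz0 : z = 0 := by rw [hzy, hy0, neg_zero]
  have h0E : (0 : EuclideanSpace ℝ (Fin n)) ∈ E := hy0 ▸ hy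
  have h0F : (0 : EuclideanSpace ℝ (Fin n)) ∈ F := hz0 ▸ hz
  ext x
  constructor
  · rintro ⟨hxE, hxF⟩
    have := huniq x x 0 0 x hxE h0F h0E hxF (inner_zero_right x) (inner_zero_left x)
      (by simp) (by simp)
    simpa using this.1
  · rintro rfl
    exact ⟨h0E, h0F⟩
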